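/- Let (Ω, μ) be a finite measure space and p ∈ (0,1). Let (w_k) be a sequence in L¹(Ω, μ) with w_k → w in L¹(Ω, μ), and let (ε_k) be a sequence of nonnegative reals with ε_k → ε ≥ 0. Then ∫_Ω ψ_{ε_k}(w_k(x)²) dμ(x) → ∫_Ω ψ_ε(w(x)²) dμ(x); in particular, for ε_k = ε = 0 this gives ∫_Ω |w_k|^p dμ → ∫_Ω |w|^p dμ. -/

import Mathlib

open MeasureTheory Filter

/-- The smoothed `p/2`-power function `ψ_ε`. For `t ≥ 0` it equals
`(p/2)·t·ε^(p-2) + (1 - p/2)·ε^p` when `t < ε²` and `t^(p/2)` when `t ≥ ε²`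
(so `ψ_0(t) = t^(p/2)`). -/
noncomputable def psi (p ε t : ℝ) : ℝ :=
  if t < ε ^ 2 then (p / 2) * t * ε ^ (p - 2) + (1 - p / 2) * ε ^ p
  else t ^ (p / 2)

section aux
variable {p : ℝ}

/-- subadditivity of rpow for exponents ≤ 1, real version. -/
lemma rpow_subadd {x y : ℝ} (hx : 0 ≤ x) (hy : 0 ≤ y) (hp : 0 ≤ p) (hp1 : p ≤ 1) :
    (x + y) ^ p ≤ x ^ p + y ^ p := by
  rw [← Real.coe_toNNReal x hx, ← Real.coe_toNNReal y hy, ← NNReal.coe_add,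
    ← NNReal.coe_rpow, ← NNReal.coe_rpow, ← NNReal.coe_rpow, ← NNReal.coe_add, NNReal.coe_le_coe]
  exact NNReal.rpow_add_le_add_rpow _ _ hp hp1

lemma rpow_sub_le {a b : ℝ} (ha : 0 ≤ a) (hab : a ≤ b) (hp : 0 ≤ p) (hp1 : p ≤ 1) :
    b ^ p ≤ a ^ p + (b - a) ^ p := by
  have := rpow_subadd ha (by linarith : (0:ℝ) ≤ b - a) hp hp1
  simpa using this

/-- tangent line inequality for concave rpow, q ∈ (0,1]. -/
lemma rpow_tangent {q e u : ℝ} (hq : 0 < q) (hq1 : q ≤ 1) (he : 0 < e) (hu : 0 ≤ u) :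
    u ^ q ≤ e ^ q + q * e ^ (q - 1) * (u - e) := by
  have hs : -1 ≤ u / e - 1 := by
    have : 0 ≤ u / e := div_nonneg hu he.le
    linarith
  -- Bernoulli for exponent q ∈ (0,1]
  have hB : (u / e) ^ q ≤ 1 + q * (u / e - 1) := by
    set s := u / e - 1 with hsdef
    have hqs : -1 ≤ q * s := by
      rcases le_or_gt 0 s with h | h
      · nlinarith
      · nlinarith
    have h2 := one_add_mul_self_le_rpow_one_add hqs
      (by rw [le_div_iff₀ hq]; linarith : (1:ℝ) ≤ 1 / q)
    have h3 : 1 + 1 / q * (q * s) = 1 + s := by field_simp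
    rw [h3] at h2
    have h4 : (0:ℝ) ≤ 1 + s := by
      have : 0 ≤ u / e := div_nonneg hu he.le
      simp only [hsdef]; linarith
    have h5 := Real.rpow_le_rpow h4 h2 hq.le
    rw [← Real.rpow_mul (by linarith : (0:ℝ) ≤ 1 + q * s)] at h5
    have h6 : 1 / q * q = 1 := by field_simp
    rw [h6, Real.rpow_one] at h5
    have h7 : 1 + s = u / e := by simp [hsdef]
    rw [h7] at h5
    exact h5
  have hepos : (0:ℝ) < e ^ q := Real.rpow_pos_of_pos he q
  have := mul_le_mul_of_nonneg_left hB hepos.le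
  rw [Real.div_rpow hu he.le] at this
  rw [mul_div_cancel₀ _ (ne_of_gt (Real.rpow_pos_of_pos he q))] at this
  calc u ^ q ≤ e ^ q * (1 + q * (u / e - 1)) := this
    _ = e ^ q + q * e ^ (q - 1) * (u - e) := by
        have : e ^ (q - 1) = e ^ q / e := by
          rw [Real.rpow_sub he, Real.rpow_one]
        rw [this]
        field_simp

lemma sq_eq_rpow_two {a : ℝ} (ha : 0 ≤ a) : a ^ 2 = a ^ (2:ℝ) := by
  rw [Real.rpow_two]

lemma sq_rpow {a q : ℝ} (ha : 0 ≤ a) : (a ^ 2) ^ q = a ^ (2 * q) := by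
  rw [sq_eq_rpow_two ha, ← Real.rpow_mul ha]

end aux

section psiLemmas
variable {p ε δ a b t : ℝ}

lemma rpow_cancel {x : ℝ} (hx : 0 < x) (y : ℝ) : x ^ (y - 2) * x ^ 2 = x ^ y := by
  rw [sq_eq_rpow_two hx.le, ← Real.rpow_add hx]
  norm_num

lemma psi_sq_eq (hε : 0 ≤ ε) (ha : ε ≤ a) : psi p ε (a ^ 2) = a ^ p := by
  have h0a : 0 ≤ a := hε.trans ha
  rw [psi, if_neg (by push_neg; exact pow_le_pow_left₀ hε ha 2), sq_rpow h0a]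
  congr 1; ring

lemma psi_ge (hp : 0 < p) (hp1 : p ≤ 1) (hε : 0 ≤ ε) (ht : 0 ≤ t) :
    t ^ (p / 2) ≤ psi p ε t := by
  rw [psi]
  split_ifs with h
  · have hε' : 0 < ε := by
      rcases hε.eq_or_lt with rfl | h'
      · simp at h; linarith
      · exact h'
    have htan := rpow_tangent (q := p / 2) (e := ε ^ 2) (u := t)
      (by linarith) (by linarith) (by positivity) ht
    have h1 : (ε ^ 2) ^ (p / 2) = ε ^ p := by rw [sq_rpow hε'.le]; congr 1; ring
    have h2 : (ε ^ 2) ^ (p / 2 - 1) = ε ^ (p - 2) := by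
      rw [sq_rpow hε'.le]; congr 1; ring
    rw [h1, h2] at htan
    have h3 : p / 2 * (ε ^ (p - 2) * ε ^ 2) = p / 2 * ε ^ p := by
      rw [rpow_cancel hε' p]
    linarith
  · exact le_refl _

lemma psi_nonneg (hp : 0 < p) (hp1 : p ≤ 1) (hε : 0 ≤ ε) (ht : 0 ≤ t) :
    0 ≤ psi p ε t :=
  (Real.rpow_nonneg ht _).trans (psi_ge hp hp1 hε ht)

lemma psi_quad (h : t < ε ^ 2) :
    psi p ε t = (p / 2) * t * ε ^ (p - 2) + (1 - p / 2) * ε ^ p := by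
  rw [psi, if_pos h]

lemma psi_sq_ge_rpow (hp : 0 < p) (hp1 : p ≤ 1) (hε : 0 ≤ ε) (ha : 0 ≤ a) :
    a ^ p ≤ psi p ε (a ^ 2) := by
  have := psi_ge hp hp1 hε (sq_nonneg a)
  rwa [sq_rpow ha, (by ring : 2 * (p / 2) = p)] at this

lemma psi_mono_arg (hp : 0 < p) (hp1 : p ≤ 1) (hε : 0 ≤ ε) (ha : 0 ≤ a) (hab : a ≤ b) :
    psi p ε (a ^ 2) ≤ psi p ε (b ^ 2) := by
  rcases le_or_gt ε b with hεb | hbε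
  · rw [psi_sq_eq hε hεb]
    rcases le_or_gt ε a with hεa | haε
    · rw [psi_sq_eq hε hεa]
      exact Real.rpow_le_rpow ha hab hp.le
    · have hε' : 0 < ε := ha.trans_lt haε
      have ha2 : a ^ 2 < ε ^ 2 := by nlinarith
      rw [psi_quad ha2]
      have hX : (0:ℝ) ≤ ε ^ (p - 2) := Real.rpow_nonneg hε _
      have hεb' : ε ^ p ≤ b ^ p := Real.rpow_le_rpow hε hεb hp.le
      have h9 : p / 2 * (a ^ 2) * ε ^ (p - 2) ≤ p / 2 * (ε ^ 2) * ε ^ (p - 2) := by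
        apply mul_le_mul_of_nonneg_right _ hX
        apply mul_le_mul_of_nonneg_left ha2.le (by linarith)
      have hc2 : p / 2 * (ε ^ (p - 2) * ε ^ 2) = p / 2 * ε ^ p := by
        rw [rpow_cancel hε' p]
      linarith
  · have hε' : 0 < ε := lt_of_le_of_lt (ha.trans hab) hbε
    have hb2 : b ^ 2 < ε ^ 2 := by nlinarith [ha.trans hab]
    have ha2 : a ^ 2 < ε ^ 2 := by nlinarith
    rw [psi_quad ha2, psi_quad hb2]
    have hX : (0:ℝ) ≤ ε ^ (p - 2) := Real.rpow_nonneg hε _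
    have h9 : p / 2 * (a ^ 2) * ε ^ (p - 2) ≤ p / 2 * (b ^ 2) * ε ^ (p - 2) := by
      apply mul_le_mul_of_nonneg_right _ hX
      apply mul_le_mul_of_nonneg_left (by nlinarith) (by linarith)
    linarith

lemma psi_lip_arg (hp : 0 < p) (hp1 : p ≤ 1) (hε : 0 ≤ ε) (ha : 0 ≤ a) (hab : a ≤ b) :
    psi p ε (b ^ 2) ≤ psi p ε (a ^ 2) + (b - a) ^ p := by
  rcases le_or_gt ε b with hεb | hbε
  · rw [psi_sq_eq hε hεb]
    have h1 : b ^ p ≤ a ^ p + (b - a) ^ p := rpow_sub_le ha hab hp.le hp1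
    have h2 : a ^ p ≤ psi p ε (a ^ 2) := psi_sq_ge_rpow hp hp1 hε ha
    linarith
  · rcases hab.eq_or_lt with rfl | hlt
    · simp [sub_self, Real.zero_rpow hp.ne']
    have hε' : 0 < ε := lt_of_le_of_lt (ha.trans hab) hbε
    have hb2 : b ^ 2 < ε ^ 2 := by nlinarith [ha.trans hab]
    have ha2 : a ^ 2 < ε ^ 2 := by nlinarith
    rw [psi_quad ha2, psi_quad hb2]
    have hd : 0 < b - a := by linarith
    have h2 : ε ^ (p - 1) ≤ (b - a) ^ (p - 1) :=
      Real.rpow_le_rpow_of_nonpos hd (by linarith) (by linarith)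
    have h3 : (b - a) ^ (p - 1) * (b - a) = (b - a) ^ p := by
      rw [← Real.rpow_add_one hd.ne']; ring_nf
    have h4 : ε ^ (p - 2) * ε = ε ^ (p - 1) := by
      rw [← Real.rpow_add_one hε'.ne']; ring_nf
    have hX : (0:ℝ) ≤ ε ^ (p - 2) := Real.rpow_nonneg hε _
    have hZ : (0:ℝ) ≤ (b - a) ^ p := Real.rpow_nonneg hd.le _
    have key : p / 2 * (b ^ 2) * ε ^ (p - 2) - p / 2 * (a ^ 2) * ε ^ (p - 2)
        ≤ (b - a) ^ p := by
      have s2 : p / 2 * ((b + a) * (b - a)) * ε ^ (p - 2)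
          ≤ p / 2 * (2 * ε * (b - a)) * ε ^ (p - 2) := by
        apply mul_le_mul_of_nonneg_right _ hX
        apply mul_le_mul_of_nonneg_left _ (by linarith)
        apply mul_le_mul_of_nonneg_right (by linarith) hd.le
      have s4 : p * (b - a) * (ε ^ (p - 2) * ε) = p * (b - a) * ε ^ (p - 1) := by
        rw [h4]
      have s5 : p * (b - a) * ε ^ (p - 1) ≤ p * (b - a) * (b - a) ^ (p - 1) := by
        apply mul_le_mul_of_nonneg_left h2 (by positivity)
      have s6 : p * (b - a) * (b - a) ^ (p - 1) = p * (b - a) ^ p := by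
        rw [← h3]; ring
      have s7 : p * (b - a) ^ p ≤ (b - a) ^ p := by nlinarith
      nlinarith [s2, s4, s5, s6, s7]
    linarith

lemma psi_mono_eps (hp : 0 < p) (hp1 : p ≤ 1) (hδ : 0 ≤ δ) (hδε : δ ≤ ε) (ha : 0 ≤ a) :
    psi p δ (a ^ 2) ≤ psi p ε (a ^ 2) := by
  have hε : 0 ≤ ε := hδ.trans hδε
  rcases le_or_gt δ a with hδa | haδ
  · rw [psi_sq_eq hδ hδa]
    exact psi_sq_ge_rpow hp hp1 hε ha
  · have hδ' : 0 < δ := ha.trans_lt haδ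
    have hε' : 0 < ε := lt_of_lt_of_le hδ' hδε
    have ha2δ : a ^ 2 < δ ^ 2 := by nlinarith
    have ha2ε : a ^ 2 < ε ^ 2 := by nlinarith
    rw [psi_quad ha2δ, psi_quad ha2ε]
    have hmix : ε ^ (p - 2) ≤ δ ^ (p - 2) :=
      Real.rpow_le_rpow_of_nonpos hδ' hδε (by linarith)
    have htang : δ ^ p ≤ p / 2 * δ ^ 2 * ε ^ (p - 2) + (1 - p / 2) * ε ^ p := by
      rcases lt_or_ge (δ ^ 2) (ε ^ 2) with h | h
      · have h5 := psi_sq_ge_rpow hp hp1 hε hδ'.le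
        rwa [psi_quad h] at h5
      · have hδε' : δ = ε := le_antisymm hδε (by nlinarith)
        subst hδε'
        have hc2 : p / 2 * (δ ^ (p - 2) * δ ^ 2) = p / 2 * δ ^ p := by
          rw [rpow_cancel hδ' p]
        linarith
    have hcδ2 : p / 2 * (δ ^ (p - 2) * δ ^ 2) = p / 2 * δ ^ p := by
      rw [rpow_cancel hδ' p]
    have hint : 0 ≤ p / 2 * ((δ ^ 2 - a ^ 2) * (δ ^ (p - 2) - ε ^ (p - 2))) :=
      mul_nonneg (by linarith)
        (mul_nonneg (by nlinarith) (by linarith))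
    nlinarith [htang, hcδ2, hint]

lemma psi_lip_eps (hp : 0 < p) (hp1 : p ≤ 1) (hδ : 0 ≤ δ) (hδε : δ ≤ ε) (ha : 0 ≤ a) :
    psi p ε (a ^ 2) ≤ psi p δ (a ^ 2) + (ε - δ) ^ p := by
  have hε : 0 ≤ ε := hδ.trans hδε
  rcases le_or_gt ε a with hεa | haε
  · rw [psi_sq_eq hε hεa, psi_sq_eq hδ (hδε.trans hεa)]
    have : (0:ℝ) ≤ (ε - δ) ^ p := Real.rpow_nonneg (by linarith) _
    linarith
  · have hε' : 0 < ε := ha.trans_lt haε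
    rcases le_or_gt δ a with hδa | haδ
    · rw [psi_sq_eq hδ hδa]
      have ha2 : a ^ 2 < ε ^ 2 := by nlinarith
      rw [psi_quad ha2]
      have hX : (0:ℝ) ≤ ε ^ (p - 2) := Real.rpow_nonneg hε _
      have h1 : ε ^ p ≤ a ^ p + (ε - a) ^ p := rpow_sub_le ha haε.le hp.le hp1
      have h2 : (ε - a) ^ p ≤ (ε - δ) ^ p :=
        Real.rpow_le_rpow (by linarith) (by linarith) hp.le
      have h9 : p / 2 * (a ^ 2) * ε ^ (p - 2) ≤ p / 2 * (ε ^ 2) * ε ^ (p - 2) := by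
        apply mul_le_mul_of_nonneg_right _ hX
        apply mul_le_mul_of_nonneg_left ha2.le (by linarith)
      have hc2 : p / 2 * (ε ^ (p - 2) * ε ^ 2) = p / 2 * ε ^ p := by
        rw [rpow_cancel hε' p]
      linarith
    · have hδ' : 0 < δ := ha.trans_lt haδ
      have ha2δ : a ^ 2 < δ ^ 2 := by nlinarith
      have ha2ε : a ^ 2 < ε ^ 2 := by nlinarith
      rw [psi_quad ha2δ, psi_quad ha2ε]
      have hmix : ε ^ (p - 2) ≤ δ ^ (p - 2) :=
        Real.rpow_le_rpow_of_nonpos hδ' hδε (by linarith)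
      have hmono : δ ^ p ≤ ε ^ p := Real.rpow_le_rpow hδ'.le hδε hp.le
      have hsub : ε ^ p ≤ δ ^ p + (ε - δ) ^ p := rpow_sub_le hδ'.le hδε hp.le hp1
      have h0 : 0 ≤ p / 2 * (a ^ 2 * (δ ^ (p - 2) - ε ^ (p - 2))) :=
        mul_nonneg (by linarith) (mul_nonneg (sq_nonneg a) (by linarith))
      have h1 : 0 ≤ p / 2 * (ε ^ p - δ ^ p) :=
        mul_nonneg (by linarith) (by linarith)
      nlinarith [h0, h1, hsub]

end psiLemmas

lemma psi_abs_diff {p : ℝ} (hp : 0 < p) (hp1 : p ≤ 1) {e e' : ℝ} (he : 0 ≤ e)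
    (he' : 0 ≤ e') (s s' : ℝ) :
    |psi p e (s ^ 2) - psi p e' (s' ^ 2)| ≤ |s - s'| ^ p + |e - e'| ^ p := by
  have hA : (0:ℝ) ≤ |s| := abs_nonneg s
  have hB : (0:ℝ) ≤ |s'| := abs_nonneg s'
  have e1 : psi p e (s ^ 2) = psi p e (|s| ^ 2) := by rw [sq_abs]
  have e2 : psi p e' (s' ^ 2) = psi p e' (|s'| ^ 2) := by rw [sq_abs]
  rw [e1, e2]
  have step1 : |psi p e (|s| ^ 2) - psi p e' (|s| ^ 2)| ≤ |e - e'| ^ p := by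
    rcases le_total e' e with h | h
    · rw [abs_of_nonneg (sub_nonneg.2 (psi_mono_eps hp hp1 he' h hA)),
        abs_of_nonneg (sub_nonneg.2 h)]
      linarith [psi_lip_eps hp hp1 he' h hA]
    · rw [abs_sub_comm, abs_of_nonneg (sub_nonneg.2 (psi_mono_eps hp hp1 he h hA)),
        abs_sub_comm, abs_of_nonneg (sub_nonneg.2 h)]
      linarith [psi_lip_eps hp hp1 he h hA]
  have step2 : |psi p e' (|s| ^ 2) - psi p e' (|s'| ^ 2)| ≤ |s - s'| ^ p := by
    rcases le_total |s'| |s| with h | h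
    · rw [abs_of_nonneg (sub_nonneg.2 (psi_mono_arg hp hp1 he' hB h))]
      have h1 := psi_lip_arg hp hp1 he' hB h
      have h2 : (|s| - |s'|) ^ p ≤ |s - s'| ^ p :=
        Real.rpow_le_rpow (by linarith) (abs_sub_abs_le_abs_sub s s') hp.le
      linarith
    · rw [abs_sub_comm, abs_of_nonneg (sub_nonneg.2 (psi_mono_arg hp hp1 he' hA h))]
      have h1 := psi_lip_arg hp hp1 he' hA h
      have h2 : (|s'| - |s|) ^ p ≤ |s - s'| ^ p := by
        rw [abs_sub_comm]
        exact Real.rpow_le_rpow (by linarith) (abs_sub_abs_le_abs_sub s' s) hp.le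
      linarith
  calc |psi p e (|s| ^ 2) - psi p e' (|s'| ^ 2)|
      ≤ |psi p e (|s| ^ 2) - psi p e' (|s| ^ 2)| +
        |psi p e' (|s| ^ 2) - psi p e' (|s'| ^ 2)| := abs_sub_le _ _ _
    _ ≤ |s - s'| ^ p + |e - e'| ^ p := by linarith

lemma measurable_psi (p c : ℝ) : Measurable (psi p c) := by
  unfold psi
  exact Measurable.ite (measurableSet_lt measurable_id measurable_const)
    (((measurable_id.const_mul (p / 2)).mul_const _).add_const _)
    (measurable_id.pow measurable_const)

lemma abs_rpow_le_one_add_abs {p : ℝ} (hp : 0 < p) (hp1 : p ≤ 1) (s : ℝ) :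
    |s| ^ p ≤ 1 + |s| := by
  rcases le_total |s| 1 with h | h
  · have := Real.rpow_le_one (abs_nonneg s) h hp.le
    linarith [abs_nonneg s]
  · have h2 : |s| ^ p ≤ |s| ^ (1:ℝ) := Real.rpow_le_rpow_of_exponent_le h hp1
    rw [Real.rpow_one] at h2
    linarith

lemma psi_sq_le (hp : 0 < p) (hp1 : p ≤ 1) {c : ℝ} (hc : 0 ≤ c) (s : ℝ) :
    psi p c (s ^ 2) ≤ 1 + |s| + c ^ p := by
  have e1 : psi p c (s ^ 2) = psi p c (|s| ^ 2) := by rw [sq_abs]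
  have h1 := psi_lip_eps hp hp1 le_rfl hc (abs_nonneg s)
  rw [psi_sq_eq le_rfl (abs_nonneg s), sub_zero] at h1
  have h2 := abs_rpow_le_one_add_abs hp hp1 s
  rw [e1]
  simpa using h1.trans (by linarith)

/-- Continuity of `G_ε(w) = ∫ ψ_ε(w²) dμ` on a finite measure space, for `p ∈ (0,1)`:
if `w_k → w` in `L¹(μ)` and `ε_k → ε ≥ 0`, then `∫ ψ_{ε_k}(w_k²) dμ → ∫ ψ_ε(w²) dμ`. -/
theorem integral_psi_tendsto {Ω : Type*} [MeasurableSpace Ω] (μ : Measure Ω)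
    [IsFiniteMeasure μ] (p : ℝ) (hp : p ∈ Set.Ioo (0 : ℝ) 1)
    (wk : ℕ → Ω → ℝ) (w : Ω → ℝ)
    (hwk : ∀ k, Integrable (wk k) μ) (hw : Integrable w μ)
    (hL1 : Tendsto (fun k => ∫ x, |wk k x - w x| ∂μ) atTop (nhds 0))
    (ε : ℕ → ℝ) (εlim : ℝ) (hε : ∀ k, 0 ≤ ε k) (hεlim : 0 ≤ εlim)
    (hεconv : Tendsto ε atTop (nhds εlim)) :
    Tendsto (fun k => ∫ x, psi p (ε k) ((wk k x) ^ 2) ∂μ) atTop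
      (nhds (∫ x, psi p εlim ((w x) ^ 2) ∂μ)) := by
  obtain ⟨hp0, hp1'⟩ := hp
  have hp1 : p ≤ 1 := hp1'.le
  -- measurability
  have hgm : ∀ k, AEStronglyMeasurable (fun x => psi p (ε k) (wk k x ^ 2)) μ := fun k =>
    ((measurable_psi p (ε k)).comp_aemeasurable
      (((hwk k).aemeasurable).pow aemeasurable_const)).aestronglyMeasurable
  have hgm' : AEStronglyMeasurable (fun x => psi p εlim (w x ^ 2)) μ :=
    ((measurable_psi p εlim).comp_aemeasurable
      ((hw.aemeasurable).pow aemeasurable_const)).aestronglyMeasurable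
  -- integrability
  have hgi : ∀ k, Integrable (fun x => psi p (ε k) (wk k x ^ 2)) μ := fun k => by
    refine Integrable.mono' ((integrable_const (1 + (ε k) ^ p)).add (hwk k).abs)
      (hgm k) (ae_of_all _ fun x => ?_)
    rw [Real.norm_eq_abs,
      abs_of_nonneg (psi_nonneg hp0 hp1 (hε k) (sq_nonneg _))]
    have := psi_sq_le hp0 hp1 (hε k) (wk k x)
    simp only [Pi.add_apply]
    linarith
  have hgi' : Integrable (fun x => psi p εlim (w x ^ 2)) μ := by
    refine Integrable.mono' ((integrable_const (1 + εlim ^ p)).add hw.abs)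
      hgm' (ae_of_all _ fun x => ?_)
    rw [Real.norm_eq_abs,
      abs_of_nonneg (psi_nonneg hp0 hp1 hεlim (sq_nonneg _))]
    have := psi_sq_le hp0 hp1 hεlim (w x)
    simp only [Pi.add_apply]
    linarith
  have hui : ∀ k, Integrable (fun x => |wk k x - w x|) μ := fun k => ((hwk k).sub hw).abs
  have huim : ∀ k, AEStronglyMeasurable (fun x => |wk k x - w x| ^ p) μ := fun k =>
    (((hui k).aemeasurable).pow aemeasurable_const).aestronglyMeasurable
  have hri : ∀ k, Integrable (fun x => |wk k x - w x| ^ p) μ := fun k => by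
    refine Integrable.mono' ((integrable_const 1).add (hui k)) (huim k)
      (ae_of_all _ fun x => ?_)
    rw [Real.norm_eq_abs, abs_of_nonneg (Real.rpow_nonneg (abs_nonneg _) _)]
    simp only [Pi.add_apply]
    have := abs_rpow_le_one_add_abs hp0 hp1 (|wk k x - w x|)
    rwa [abs_abs] at this
  -- the key bound
  have hbound : ∀ k,
      |(∫ x, psi p (ε k) (wk k x ^ 2) ∂μ) - ∫ x, psi p εlim (w x ^ 2) ∂μ|
        ≤ (∫ x, |wk k x - w x| ^ p ∂μ) + (μ Set.univ).toReal * |ε k - εlim| ^ p := by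
    intro k
    rw [← integral_sub (hgi k) hgi']
    have h1 : |∫ x, (psi p (ε k) (wk k x ^ 2) - psi p εlim (w x ^ 2)) ∂μ|
        ≤ ∫ x, |psi p (ε k) (wk k x ^ 2) - psi p εlim (w x ^ 2)| ∂μ := by
      simpa [Real.norm_eq_abs] using
        norm_integral_le_integral_norm (fun x => psi p (ε k) (wk k x ^ 2) - psi p εlim (w x ^ 2)) (μ := μ)
    refine h1.trans ?_
    have h2 : ∫ x, |psi p (ε k) (wk k x ^ 2) - psi p εlim (w x ^ 2)| ∂μ
        ≤ ∫ x, (|wk k x - w x| ^ p + |ε k - εlim| ^ p) ∂μ := by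
      refine integral_mono ((hgi k).sub hgi').abs ((hri k).add (integrable_const _))
        fun x => ?_
      exact psi_abs_diff hp0 hp1 (hε k) hεlim (wk k x) (w x)
    refine h2.trans ?_
    rw [integral_add (hri k) (integrable_const _), integral_const, smul_eq_mul]
    exact le_rfl
  -- convergence of the bound
  have hB : Tendsto (fun k => (μ Set.univ).toReal * |ε k - εlim| ^ p) atTop (nhds 0) := by
    have h1 : Tendsto (fun k => |ε k - εlim|) atTop (nhds 0) := by
      have h2 := (hεconv.sub_const εlim).abs
      simpa using h2
    have hc : ContinuousAt (fun x : ℝ => x ^ p) 0 :=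
      Real.continuousAt_rpow_const 0 p (Or.inr hp0.le)
    have h3 := (hc.tendsto.comp h1)
    rw [Real.zero_rpow hp0.ne'] at h3
    simpa using h3.const_mul ((μ Set.univ).toReal)
  have hA : Tendsto (fun k => ∫ x, |wk k x - w x| ^ p ∂μ) atTop (nhds 0) := by
    rw [Metric.tendsto_atTop]
    intro η hη
    set M : ℝ := (μ Set.univ).toReal + 1 with hM
    have hMpos : 0 < M := by positivity
    set δ : ℝ := (η / (2 * M)) ^ (1 / p) with hδ
    have hδpos : 0 < δ := Real.rpow_pos_of_pos (by positivity) _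
    have hδp : δ ^ p = η / (2 * M) := by
      rw [hδ, ← Real.rpow_mul (by positivity), one_div, inv_mul_cancel₀ hp0.ne',
        Real.rpow_one]
    have hptwise : ∀ u : ℝ, |u| ^ p ≤ δ ^ p + δ ^ (p - 1) * |u| := by
      intro u
      rcases le_total |u| δ with h | h
      · have h1 : |u| ^ p ≤ δ ^ p := Real.rpow_le_rpow (abs_nonneg u) h hp0.le
        have h2 : 0 ≤ δ ^ (p - 1) * |u| :=
          mul_nonneg (Real.rpow_nonneg hδpos.le _) (abs_nonneg u)
        linarith
      · have hu0 : 0 < |u| := lt_of_lt_of_le hδpos h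
        have h1 : |u| ^ (p - 1) ≤ δ ^ (p - 1) :=
          Real.rpow_le_rpow_of_nonpos hδpos h (by linarith)
        have h2 : |u| ^ (p - 1) * |u| = |u| ^ p := by
          rw [← Real.rpow_add_one hu0.ne']; ring_nf
        have h3 : |u| ^ (p - 1) * |u| ≤ δ ^ (p - 1) * |u| :=
          mul_le_mul_of_nonneg_right h1 (abs_nonneg u)
        have h4 : (0:ℝ) ≤ δ ^ p := Real.rpow_nonneg hδpos.le _
        linarith
    have hIbound : ∀ k, ∫ x, |wk k x - w x| ^ p ∂μ
        ≤ δ ^ p * (μ Set.univ).toReal + δ ^ (p - 1) * ∫ x, |wk k x - w x| ∂μ := by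
      intro k
      have h1 : ∫ x, |wk k x - w x| ^ p ∂μ
          ≤ ∫ x, (δ ^ p + δ ^ (p - 1) * |wk k x - w x|) ∂μ := by
        refine integral_mono (hri k)
          ((integrable_const _).add ((hui k).const_mul _)) fun x => hptwise _
      refine h1.trans ?_
      rw [integral_add (integrable_const _) ((hui k).const_mul _), integral_const,
        smul_eq_mul, integral_const_mul]
      ring_nf
      exact le_of_eq (congrArg (· + δ ^ (-1 + p) * ∫ (a : Ω), |wk k a - w a| ∂μ) (mul_comm _ _))
    have hsmall : δ ^ p * (μ Set.univ).toReal < η / 2 := by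
      rw [hδp]
      have hT : (μ Set.univ).toReal < M := by rw [hM]; linarith
      have hT0 : 0 ≤ (μ Set.univ).toReal := ENNReal.toReal_nonneg
      rw [div_mul_eq_mul_div, div_lt_iff₀ (by positivity)]
      nlinarith
    have hev : ∀ᶠ k in atTop, δ ^ (p - 1) * (∫ x, |wk k x - w x| ∂μ) < η / 2 := by
      have h5 := hL1.const_mul (δ ^ (p - 1))
      rw [mul_zero] at h5
      exact h5.eventually (eventually_lt_nhds (by positivity : (0:ℝ) < η / 2))
    obtain ⟨N, hN⟩ := eventually_atTop.1 hev
    refine ⟨N, fun n hn => ?_⟩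
    rw [Real.dist_eq, sub_zero,
      abs_of_nonneg (integral_nonneg fun x => Real.rpow_nonneg (abs_nonneg _) _)]
    calc ∫ x, |wk n x - w x| ^ p ∂μ
        ≤ δ ^ p * (μ Set.univ).toReal + δ ^ (p - 1) * ∫ x, |wk n x - w x| ∂μ :=
          hIbound n
      _ < η / 2 + η / 2 := by
          have := hN n hn
          linarith [hsmall]
      _ = η := by ring
  -- conclude
  have hsq : Tendsto (fun k => (∫ x, psi p (ε k) (wk k x ^ 2) ∂μ)
      - ∫ x, psi p εlim (w x ^ 2) ∂μ) atTop (nhds 0) := by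
    refine squeeze_zero_norm (fun k => ?_) (by simpa using hA.add hB)
    rw [Real.norm_eq_abs]
    exact hbound k
  have := hsq.add_const (∫ x, psi p εlim (w x ^ 2) ∂μ)
  simpa using this
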